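/- Let A be a semigroup in a braided monoidal category C whose multiplication m is non-degenerate with respect to some class of objects containing A. Suppose (t₁,t₂,t₃,t₄) and (t₁′,t₂′,t₃′,t₄′) are two quadruples of morphisms A⊗A → A⊗A each satisfying all six compatibility relations (c12)–(c34) with respect to m. If tᵢ = tᵢ′ for some single index i ∈ {1,2,3,4}, then tⱼ = tⱼ′ for every j ∈ {1,2,3,4}. -/

import Mathlib

open CategoryTheory Category MonoidalCategory

universe v u

namespace WeakMultiplierBimonoid

variable {C : Type u} [Category.{v} C] [MonoidalCategory C] [BraidedCategory C]

/-- For `f : A ⊗ A ⟶ A ⊗ A`, the morphism `f ⊗ 1 : A ⊗ (A ⊗ A) ⟶ A ⊗ (A ⊗ A)`. -/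
def wl {A : C} (f : A ⊗ A ⟶ A ⊗ A) : A ⊗ (A ⊗ A) ⟶ A ⊗ (A ⊗ A) :=
  (α_ A A A).inv ≫ (f ▷ A) ≫ (α_ A A A).hom

/-- For `f : A ⊗ A ⟶ A`, the morphism `f ⊗ 1 : A ⊗ (A ⊗ A) ⟶ A ⊗ A`. -/
def ml {A : C} (f : A ⊗ A ⟶ A) : A ⊗ (A ⊗ A) ⟶ A ⊗ A :=
  (α_ A A A).inv ≫ (f ▷ A)

/-- A morphism `v : Z ⊗ V ⟶ W` is non-degenerate on the left with respect to a class
`𝒴` of objects if for every `X` and every `Y ∈ 𝒴` the map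
`Hom(X, V ⊗ Y) → Hom(Z ⊗ X, W ⊗ Y)`, `g ↦ (v ⊗ 1) ∘ (1 ⊗ g)`, is injective. -/
def NdLeftOn {Z V W : C} (v : Z ⊗ V ⟶ W) (𝒴 : Set C) : Prop :=
  ∀ (X : C), ∀ Y ∈ 𝒴, Function.Injective
    (fun g : X ⟶ V ⊗ Y => (Z ◁ g) ≫ (α_ Z V Y).inv ≫ (v ▷ Y))

/-- Non-degenerate on the right with respect to `𝒴`: `v ∘ c` is non-degenerate on the
left with respect to `𝒴`. -/
def NdRightOn {Z V W : C} (v : Z ⊗ V ⟶ W) (𝒴 : Set C) : Prop :=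
  NdLeftOn ((β_ V Z).hom ≫ v) 𝒴

/-- Relation (c12): `(m ⊗ 1) ∘ (1 ⊗ t₁) = (1 ⊗ m) ∘ (t₂ ⊗ 1)`. -/
def C12 {A : C} (m : A ⊗ A ⟶ A) (t₁ t₂ : A ⊗ A ⟶ A ⊗ A) : Prop :=
  (A ◁ t₁) ≫ ml m = wl t₂ ≫ (A ◁ m)

/-- Relation (c13): `(1 ⊗ m) ∘ (1 ⊗ c) ∘ (t₁ ⊗ 1) = (1 ⊗ m) ∘ (t₃ ⊗ 1) ∘ (1 ⊗ c)`. -/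
def C13 {A : C} (m : A ⊗ A ⟶ A) (t₁ t₃ : A ⊗ A ⟶ A ⊗ A) : Prop :=
  wl t₁ ≫ (A ◁ (β_ A A).hom) ≫ (A ◁ m)
    = (A ◁ (β_ A A).hom) ≫ wl t₃ ≫ (A ◁ m)

/-- Relation (c14): `(m ⊗ 1) ∘ (c ⊗ 1) ∘ (1 ⊗ t₁) = (1 ⊗ m) ∘ (t₄ ⊗ 1)`. -/
def C14 {A : C} (m : A ⊗ A ⟶ A) (t₁ t₄ : A ⊗ A ⟶ A ⊗ A) : Prop :=
  (A ◁ t₁) ≫ wl (β_ A A).hom ≫ ml m = wl t₄ ≫ (A ◁ m)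

/-- Relation (c23): `(1 ⊗ m) ∘ (1 ⊗ c) ∘ (t₂ ⊗ 1) = (m ⊗ 1) ∘ (1 ⊗ t₃)`. -/
def C23 {A : C} (m : A ⊗ A ⟶ A) (t₂ t₃ : A ⊗ A ⟶ A ⊗ A) : Prop :=
  wl t₂ ≫ (A ◁ (β_ A A).hom) ≫ (A ◁ m) = (A ◁ t₃) ≫ ml m

/-- Relation (c24): `(m ⊗ 1) ∘ (c ⊗ 1) ∘ (1 ⊗ t₂) = (m ⊗ 1) ∘ (1 ⊗ t₄) ∘ (c ⊗ 1)`. -/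
def C24 {A : C} (m : A ⊗ A ⟶ A) (t₂ t₄ : A ⊗ A ⟶ A ⊗ A) : Prop :=
  (A ◁ t₂) ≫ wl (β_ A A).hom ≫ ml m = wl (β_ A A).hom ≫ (A ◁ t₄) ≫ ml m

/-- Relation (c34): `(m ⊗ 1) ∘ (c ⊗ 1) ∘ (1 ⊗ t₃) = (1 ⊗ m) ∘ (1 ⊗ c) ∘ (t₄ ⊗ 1)`. -/
def C34 {A : C} (m : A ⊗ A ⟶ A) (t₃ t₄ : A ⊗ A ⟶ A ⊗ A) : Prop :=
  (A ◁ t₃) ≫ wl (β_ A A).hom ≫ ml m = wl t₄ ≫ (A ◁ (β_ A A).hom) ≫ (A ◁ m)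


section Aux

variable {A : C} {𝒴 : Set C} {m : A ⊗ A ⟶ A}

lemma braid_aux1 (A : C) :
    (β_ A (A ⊗ A)).hom ≫ (α_ A A A).hom ≫ (β_ (A ⊗ A) A).inv
      = (A ◁ (β_ A A).inv) ≫ (α_ A A A).inv ≫ ((β_ A A).hom ▷ A) := by
  simp only [BraidedCategory.braiding_tensor_right_hom, BraidedCategory.braiding_tensor_left_inv]
  rw [← cancel_mono ((α_ A A A).hom ≫ (A ◁ (β_ A A).hom) ≫ (α_ A A A).inv ≫
      ((β_ A A).hom ▷ A) ≫ (α_ A A A).hom)]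
  simp only [assoc, Iso.inv_hom_id_assoc, Iso.hom_inv_id_assoc, whiskerLeft_inv_hom_assoc,
    whiskerLeft_hom_inv_assoc, hom_inv_whiskerRight_assoc, inv_hom_whiskerRight_assoc,
    Iso.inv_hom_id, comp_id]
  rw [← cancel_epi (A ◁ (β_ A A).hom)]
  simp only [whiskerLeft_hom_inv_assoc]
  exact (BraidedCategory.yang_baxter A A A).symm

lemma braid_aux2 (A : C) :
    (β_ (A ⊗ A) A).inv ≫ (α_ A A A).hom ≫ (A ◁ (β_ A A).hom) ≫ (β_ A (A ⊗ A)).hom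
      = (A ◁ (β_ A A).hom) ≫ (α_ A A A).inv := by
  rw [← cancel_epi (β_ (A ⊗ A) A).hom, Iso.hom_inv_id_assoc]
  simp only [BraidedCategory.braiding_tensor_left_hom, BraidedCategory.braiding_tensor_right_hom, assoc]

lemma conv1 (m : A ⊗ A ⟶ A) (t : A ⊗ A ⟶ A ⊗ A) :
    (β_ A (A ⊗ A)).hom ≫ (α_ A A A).hom ≫ wl t ≫ (A ◁ m) ≫ (β_ A A).inv
      = (A ◁ (t ≫ (β_ A A).inv)) ≫ (α_ A A A).inv ≫ (((β_ A A).hom ≫ m) ▷ A) := by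
  rw [wl]
  simp only [assoc, Iso.hom_inv_id_assoc]
  rw [← BraidedCategory.braiding_naturality_right_assoc A t]
  rw [BraidedCategory.braiding_inv_naturality_right]
  rw [reassoc_of% (braid_aux1 A)]
  simp only [MonoidalCategory.whiskerLeft_comp, MonoidalCategory.comp_whiskerRight, assoc]

lemma conv2 (m : A ⊗ A ⟶ A) (t : A ⊗ A ⟶ A ⊗ A) :
    (β_ (A ⊗ A) A).inv ≫ (α_ A A A).hom ≫ wl t ≫ (A ◁ (β_ A A).hom) ≫ (A ◁ m)
        ≫ (β_ A A).hom
      = (A ◁ (t ≫ (β_ A A).hom)) ≫ (α_ A A A).inv ≫ (m ▷ A) := by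
  rw [wl]
  simp only [assoc, Iso.hom_inv_id_assoc]
  rw [← BraidedCategory.braiding_inv_naturality_right_assoc]
  rw [BraidedCategory.braiding_naturality_right A m]
  rw [reassoc_of% (braid_aux2 A)]
  simp only [MonoidalCategory.whiskerLeft_comp, assoc]

lemma cancL (hndl : NdLeftOn m 𝒴) (hA : A ∈ 𝒴) {t t' : A ⊗ A ⟶ A ⊗ A}
    (h : (A ◁ t) ≫ ml m = (A ◁ t') ≫ ml m) : t = t' := by
  apply hndl (A ⊗ A) A hA
  simpa only [ml] using h

lemma cancR (hndr : NdRightOn m 𝒴) (hA : A ∈ 𝒴) {t t' : A ⊗ A ⟶ A ⊗ A}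
    (h : (A ◁ t) ≫ wl (β_ A A).hom ≫ ml m = (A ◁ t') ≫ wl (β_ A A).hom ≫ ml m) :
    t = t' := by
  apply hndr (A ⊗ A) A hA
  simp only [wl, ml, assoc, Iso.hom_inv_id_assoc, MonoidalCategory.comp_whiskerRight] at h ⊢
  exact h

/-- cancellation for the form `(1 ⊗ m) ∘ (t ⊗ 1)`. -/
lemma cancE1 (hndr : NdRightOn m 𝒴) (hA : A ∈ 𝒴) {t t' : A ⊗ A ⟶ A ⊗ A}
    (h : wl t ≫ (A ◁ m) = wl t' ≫ (A ◁ m)) : t = t' := by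
  have h2 : (A ◁ (t ≫ (β_ A A).inv)) ≫ (α_ A A A).inv ≫ (((β_ A A).hom ≫ m) ▷ A)
      = (A ◁ (t' ≫ (β_ A A).inv)) ≫ (α_ A A A).inv ≫ (((β_ A A).hom ≫ m) ▷ A) := by
    rw [← conv1 m t, ← conv1 m t', reassoc_of% h]
  have h3 := hndr (A ⊗ A) A hA h2
  rwa [← cancel_mono (β_ A A).inv]

/-- cancellation for the form `(1 ⊗ m) ∘ (1 ⊗ c) ∘ (t ⊗ 1)`. -/
lemma cancE2 (hndl : NdLeftOn m 𝒴) (hA : A ∈ 𝒴) {t t' : A ⊗ A ⟶ A ⊗ A}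
    (h : wl t ≫ (A ◁ (β_ A A).hom) ≫ (A ◁ m) = wl t' ≫ (A ◁ (β_ A A).hom) ≫ (A ◁ m)) :
    t = t' := by
  have h2 : (A ◁ (t ≫ (β_ A A).hom)) ≫ (α_ A A A).inv ≫ (m ▷ A)
      = (A ◁ (t' ≫ (β_ A A).hom)) ≫ (α_ A A A).inv ≫ (m ▷ A) := by
    rw [← conv2 m t, ← conv2 m t', reassoc_of% h]
  have h3 := hndl (A ⊗ A) A hA h2
  rwa [← cancel_mono (β_ A A).hom]

end Aux

/-- Corollary 2.5: if two quadruples, each satisfying all six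
compatibility relations with respect to `m`, agree in one component then they agree
in all components. -/
theorem corollary_uniqueness
    (A : C) (𝒴 : Set C) (hA : A ∈ 𝒴)
    (m : A ⊗ A ⟶ A)
    (hassoc : ml m ≫ m = (A ◁ m) ≫ m)
    (hndl : NdLeftOn m 𝒴) (hndr : NdRightOn m 𝒴)
    (t₁ t₂ t₃ t₄ t₁' t₂' t₃' t₄' : A ⊗ A ⟶ A ⊗ A)
    (h12 : C12 m t₁ t₂) (h13 : C13 m t₁ t₃) (h14 : C14 m t₁ t₄)
    (h23 : C23 m t₂ t₃) (h24 : C24 m t₂ t₄) (h34 : C34 m t₃ t₄)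
    (h12' : C12 m t₁' t₂') (h13' : C13 m t₁' t₃') (h14' : C14 m t₁' t₄')
    (h23' : C23 m t₂' t₃') (h24' : C24 m t₂' t₄') (h34' : C34 m t₃' t₄')
    (hsome : t₁ = t₁' ∨ t₂ = t₂' ∨ t₃ = t₃' ∨ t₄ = t₄') :
    t₁ = t₁' ∧ t₂ = t₂' ∧ t₃ = t₃' ∧ t₄ = t₄' := by
  obtain h1 | h2 | h3 | h4 := hsome
  case _ => -- t₁ = t₁'
    have e2 : t₂ = t₂' := cancE1 hndr hA (by rw [← h12, ← h12', h1])
    have e4 : t₄ = t₄' := cancE1 hndr hA (by rw [← h14, ← h14', h1])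
    have e3 : t₃ = t₃' := cancL hndl hA (by rw [← h23, ← h23', e2])
    exact ⟨h1, e2, e3, e4⟩
  case _ =>
    have e1 : t₁ = t₁' := cancL hndl hA (by rw [h12, h12', h2])
    have e3 : t₃ = t₃' := cancL hndl hA (by rw [← h23, ← h23', h2])
    have e4 : t₄ = t₄' := cancE1 hndr hA (by rw [← h14, ← h14', e1])
    exact ⟨e1, h2, e3, e4⟩
  case _ =>
    have e2 : t₂ = t₂' := cancE2 hndl hA (by rw [h23, h23', h3])
    have e1 : t₁ = t₁' := cancL hndl hA (by rw [h12, h12', e2])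
    have e4 : t₄ = t₄' := cancE1 hndr hA (by rw [← h14, ← h14', e1])
    exact ⟨e1, e2, h3, e4⟩
  case _ =>
    have e1 : t₁ = t₁' := cancR hndr hA (by rw [h14, h14', h4])
    have e2 : t₂ = t₂' := cancR hndr hA (by rw [h24, h24', h4])
    have e3 : t₃ = t₃' := cancR hndr hA (by rw [h34, h34', h4])
    exact ⟨e1, e2, e3, h4⟩


end WeakMultiplierBimonoid
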